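/- If f₁, f₂, f₃ are orthonormal imaginary octonions, then the products f₂f₃, f₃f₁, f₁f₂ are mutually orthogonal unit imaginary octonions. -/
import Mathlib


noncomputable section

open Quaternion

/-- Octonions as pairs of quaternions (Cayley–Dickson construction). -/
abbrev Octo : Type := ℍ[ℝ] × ℍ[ℝ]

/-- Octonion multiplication: (q,r)(s,t) = (qs - t̄r, tq + rs̄). -/
def omul (x y : Octo) : Octo :=
  (x.1 * y.1 - star y.2 * x.2, y.2 * x.1 + x.2 * star y.1)

/-- Octonion conjugation: (q,r)̄ = (q̄, -r). -/
def oconj (x : Octo) : Octo := (star x.1, -x.2)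

/-- Inner product ⟨x,y⟩ = (x ȳ + y x̄)/2 (a real multiple of 1, returned as a real). -/
def oinner (x y : Octo) : ℝ :=
  ((omul x (oconj y) + omul y (oconj x)).1).re / 2

/-- x is an imaginary octonion: x + x̄ = 0. -/
def IsIm (x : Octo) : Prop := x + oconj x = 0

/-- Embedding of the reals into the octonions. -/
def oR (r : ℝ) : Octo := ((r : ℍ[ℝ]), 0)

/-- Cross product x×y = (xy - yx)/2. -/
def ocross (x y : Octo) : Octo := (2⁻¹ : ℝ) • (omul x y - omul y x)

/-- Norm of an octonion. -/
def onorm (x : Octo) : ℝ := Real.sqrt (oinner x x)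

/-- Associator [x,y,z] = (xy)z - x(yz). -/
def oassoc (x y z : Octo) : Octo := omul (omul x y) z - omul x (omul y z)

/-- f₁,f₂,f₃ are orthonormal. -/
def OrthoTriple (f1 f2 f3 : Octo) : Prop :=
  oinner f1 f1 = 1 ∧ oinner f2 f2 = 1 ∧ oinner f3 f3 = 1 ∧
  oinner f1 f2 = 0 ∧ oinner f1 f3 = 0 ∧ oinner f2 f3 = 0


/-- For orthonormal imaginary f₁,f₂,f₃, the products f₂f₃, f₃f₁, f₁f₂ are mutually
    orthogonal unit imaginary octonions. -/

lemma oinner_eq (x y : Octo) : oinner x y =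
    x.1.re*y.1.re + x.1.imI*y.1.imI + x.1.imJ*y.1.imJ + x.1.imK*y.1.imK +
    x.2.re*y.2.re + x.2.imI*y.2.imI + x.2.imJ*y.2.imJ + x.2.imK*y.2.imK := by
  simp [oinner, omul, oconj, Quaternion.re_mul]
  ring

lemma oinner_comm (x y : Octo) : oinner x y = oinner y x := by
  simp [oinner_eq]; ring

lemma im_re {x : Octo} (h : IsIm x) : x.1.re = 0 := by
  have := congrArg (fun p : Octo => p.1.re) h
  simp [oconj] at this
  linarith

lemma im_of_re {x : Octo} (h : x.1.re = 0) : IsIm x := by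
  simp [IsIm, oconj, Prod.ext_iff, Quaternion.ext_iff, h]

lemma onorm_mul (x y : Octo) : oinner (omul x y) (omul x y) = oinner x x * oinner y y := by
  simp [oinner_eq, omul, Quaternion.re_mul]
  ring

lemma omul_re_im {x y : Octo} (hx : x.1.re = 0) (hy : y.1.re = 0) :
    (omul x y).1.re = -oinner x y := by
  simp [oinner_eq, omul, Quaternion.re_mul, hx, hy]
  ring

lemma cross1 (x y z : Octo) (hx : x.1.re = 0) (hy : y.1.re = 0) (hz : z.1.re = 0) :
    oinner (omul x y) (omul y z) =
      2 * oinner x y * oinner y z - oinner y y * oinner z x := by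
  simp [oinner_eq, omul, Quaternion.re_mul, hx, hy, hz]
  ring

lemma cross2 (x y z : Octo) (hx : x.1.re = 0) (hy : y.1.re = 0) (hz : z.1.re = 0) :
    oinner (omul y x) (omul z y) =
      2 * oinner x y * oinner y z - oinner y y * oinner z x := by
  simp [oinner_eq, omul, Quaternion.re_mul, hx, hy, hz]
  ring

theorem stmt6 (f1 f2 f3 : Octo) (h1 : IsIm f1) (h2 : IsIm f2) (h3 : IsIm f3)
    (hortho : OrthoTriple f1 f2 f3) :
    IsIm (omul f2 f3) ∧ IsIm (omul f3 f1) ∧ IsIm (omul f1 f2) ∧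
    oinner (omul f2 f3) (omul f2 f3) = 1 ∧
    oinner (omul f3 f1) (omul f3 f1) = 1 ∧
    oinner (omul f1 f2) (omul f1 f2) = 1 ∧
    oinner (omul f2 f3) (omul f3 f1) = 0 ∧
    oinner (omul f2 f3) (omul f1 f2) = 0 ∧
    oinner (omul f3 f1) (omul f1 f2) = 0 := by
  obtain ⟨n1, n2, n3, o12, o13, o23⟩ := hortho
  have r1 := im_re h1
  have r2 := im_re h2
  have r3 := im_re h3
  refine ⟨?_, ?_, ?_, ?_, ?_, ?_, ?_, ?_, ?_⟩
  · exact im_of_re (by rw [omul_re_im r2 r3, o23, neg_zero])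
  · exact im_of_re (by rw [omul_re_im r3 r1, oinner_comm, o13, neg_zero])
  · exact im_of_re (by rw [omul_re_im r1 r2, o12, neg_zero])
  · rw [onorm_mul, n2, n3]; ring
  · rw [onorm_mul, n3, n1]; ring
  · rw [onorm_mul, n1, n2]; ring
  · rw [cross1 f2 f3 f1 r2 r3 r1, o23, o12]; ring
  · rw [cross2 f3 f2 f1 r3 r2 r1, oinner_comm f3 f2, o23, o13]; ring
  · rw [cross1 f3 f1 f2 r3 r1 r2, oinner_comm f3 f1, o13, o23]; ring
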